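/- Let f, g : ℝ → ℝ be C¹ with g(x₀) = 0, g'(x₀) ≠ 0 and f(x₀) ≠ 0, and suppose λ := g'(x₀)/f(x₀) < 0. Then x₀ is an incoming singularity: there exists a neighborhood U of x₀ such that every solution of g(x)ẋ = f(x) (i.e., of ẋ = f(x)/g(x) for x ≠ x₀) with initial condition in U \ {x₀} reaches x₀ in finite forward time. -/

import Mathlib

/-- If `g(x₀) = 0`, `g'(x₀) ≠ 0`, `f(x₀) ≠ 0` and `λ = g'(x₀)/f(x₀) < 0`, then `x₀` is
an incoming singularity of `g(x)ẋ = f(x)`: every forward solution of `ẋ = f(x)/g(x)`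
starting near `x₀` reaches `x₀` in finite forward time. -/
theorem simple_singularity_incoming
    (f g : ℝ → ℝ) (hf : ContDiff ℝ 1 f) (hg : ContDiff ℝ 1 g)
    (x₀ : ℝ) (hg0 : g x₀ = 0) (hg' : deriv g x₀ ≠ 0) (hf0 : f x₀ ≠ 0)
    (hlam : deriv g x₀ / f x₀ < 0) :
    ∃ U ∈ nhds x₀, ∀ a ∈ U \ {x₀}, ∀ x : ℝ → ℝ,
      Continuous x → x 0 = a →
      (∀ t ≥ (0:ℝ), x t ≠ x₀ → HasDerivAt x (f (x t) / g (x t)) t) →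
      ∃ T > (0:ℝ), x T = x₀ := by
  set L : ℝ := f x₀ / deriv g x₀ with hLdef
  have hLneg : L < 0 := by
    rcases div_neg_iff.mp hlam with ⟨h1, h2⟩ | ⟨h1, h2⟩
    · exact div_neg_of_neg_of_pos h2 h1
    · exact div_neg_of_pos_of_neg h2 h1
  set c : ℝ := -L / 2 with hcdef
  have hcpos : 0 < c := by simp only [hcdef]; linarith
  -- slope of g tends to deriv g x₀
  have hgd : HasDerivAt g (deriv g x₀) x₀ := (hg.differentiable one_ne_zero x₀).hasDerivAt
  have hslope : Filter.Tendsto (slope g x₀) (nhdsWithin x₀ {x₀}ᶜ) (nhds (deriv g x₀)) :=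
    hasDerivAt_iff_tendsto_slope.mp hgd
  have hfcont : Filter.Tendsto f (nhdsWithin x₀ {x₀}ᶜ) (nhds (f x₀)) :=
    ((hf.continuous.tendsto x₀).mono_left nhdsWithin_le_nhds)
  have hphi : Filter.Tendsto (fun z => (z - x₀) * (f z / g z)) (nhdsWithin x₀ {x₀}ᶜ)
      (nhds L) := by
    have h := hfcont.div hslope hg'
    refine h.congr' ?_
    filter_upwards [self_mem_nhdsWithin] with z hz
    have hz' : z - x₀ ≠ 0 := sub_ne_zero.mpr hz
    have hsl : slope g x₀ z = g z / (z - x₀) := by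
      rw [slope_def_field, hg0, sub_zero]
    simp only [Pi.div_apply]
    rw [hsl, div_div_eq_mul_div]
    ring
  have hev : ∀ᶠ z in nhdsWithin x₀ {x₀}ᶜ, (z - x₀) * (f z / g z) ≤ -c := by
    have hlt : L < -c := by simp only [hcdef]; linarith
    exact (hphi.eventually_lt_const hlt).mono fun z h => h.le
  rcases Metric.mem_nhdsWithin_iff.mp hev with ⟨δ, hδpos, hball⟩
  refine ⟨Metric.ball x₀ (δ / 2), Metric.ball_mem_nhds _ (by linarith), ?_⟩
  rintro a ⟨ha, hax⟩ x hxc hx0 hxd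
  simp only [Set.mem_singleton_iff] at hax
  by_contra hT
  push_neg at hT
  have hne : ∀ t ≥ (0:ℝ), x t ≠ x₀ := by
    intro t ht
    rcases eq_or_lt_of_le ht with h | h
    · rw [← h, hx0]; exact hax
    · exact hT t h
  have haδ : |a - x₀| < δ / 2 := by
    have := Metric.mem_ball.mp ha
    rwa [Real.dist_eq] at this
  set S : Set ℝ := {t : ℝ | 0 ≤ t ∧ ∀ s ∈ Set.Icc (0:ℝ) t, |x s - x₀| ≤ δ / 2} with hSdef
  have h0S : (0:ℝ) ∈ S := by
    refine ⟨le_rfl, fun s hs => ?_⟩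
    have hs0 : s = 0 := le_antisymm hs.2 hs.1
    rw [hs0, hx0]; exact haδ.le
  -- the key differential inequality estimate
  have lemA : ∀ t ∈ S, (x t - x₀)^2 ≤ (a - x₀)^2 - 2 * c * t := by
    intro t ht
    obtain ⟨ht0, hts⟩ := ht
    rcases eq_or_lt_of_le ht0 with h | h
    · rw [← h, hx0]; simp
    · have hderiv : ∀ u ∈ Set.Ioo (0:ℝ) t, HasDerivAt (fun u => (x u - x₀)^2 + 2 * c * u)
          (2 * (x u - x₀) * (f (x u) / g (x u)) + 2 * c) u := by
        intro u hu
        have hxu := hxd u hu.1.le (hne u hu.1.le)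
        have h1 := (hxu.sub_const x₀).fun_pow 2
        have h2 := (hasDerivAt_id u).const_mul (2 * c)
        refine (h1.fun_add h2).congr_deriv ?_
        push_cast
        ring
      have hmono : AntitoneOn (fun u => (x u - x₀)^2 + 2 * c * u) (Set.Icc 0 t) := by
        apply antitoneOn_of_deriv_nonpos (convex_Icc 0 t)
        · fun_prop
        · rw [interior_Icc]
          intro u hu
          exact (hderiv u hu).differentiableAt.differentiableWithinAt
        · intro u hu
          rw [interior_Icc] at hu
          rw [(hderiv u hu).deriv]
          have hbnd : (x u - x₀) * (f (x u) / g (x u)) ≤ -c := by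
            apply hball
            refine ⟨Metric.mem_ball.mpr ?_, hne u hu.1.le⟩
            rw [Real.dist_eq]
            have := hts u ⟨hu.1.le, hu.2.le⟩
            linarith
          linarith
      have hfin := hmono (Set.left_mem_Icc.mpr ht0) (Set.right_mem_Icc.mpr ht0) ht0
      simp only [mul_zero, add_zero, hx0] at hfin
      linarith
  have hbdd : BddAbove S := by
    refine ⟨(a - x₀)^2 / (2 * c), fun t ht => ?_⟩
    have h1 := lemA t ht
    have h2 : (0:ℝ) ≤ (x t - x₀)^2 := sq_nonneg _
    rw [le_div_iff₀ (by positivity)]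
    linarith
  set τ : ℝ := sSup S with hτdef
  have hτ0 : 0 ≤ τ := le_csSup hbdd h0S
  have hIco : ∀ s, 0 ≤ s → s < τ → |x s - x₀| ≤ δ / 2 := by
    intro s hs0 hsτ
    obtain ⟨t, htS, hst⟩ := exists_lt_of_lt_csSup ⟨0, h0S⟩ hsτ
    exact htS.2 s ⟨hs0, hst.le⟩
  have hτS : τ ∈ S := by
    refine ⟨hτ0, fun s hs => ?_⟩
    rcases eq_or_lt_of_le hs.2 with h | h
    · -- s = τ : continuity argument
      rcases eq_or_lt_of_le hτ0 with h0 | h0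
      · have hs0 : s = 0 := by rw [h, ← h0]
        rw [hs0, hx0]; exact haδ.le
      · have hclosed : IsClosed {u : ℝ | |x u - x₀| ≤ δ / 2} := by
          have : Continuous fun u => |x u - x₀| := by fun_prop
          exact isClosed_le this continuous_const
        have hsub : Set.Ico (0:ℝ) τ ⊆ {u : ℝ | |x u - x₀| ≤ δ / 2} :=
          fun u hu => hIco u hu.1 hu.2
        have hmem : τ ∈ closure (Set.Ico (0:ℝ) τ) := by
          rw [closure_Ico (ne_of_lt h0)]
          exact Set.right_mem_Icc.mpr hτ0
        have := hclosed.closure_subset ((closure_mono hsub) hmem)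
        rw [h]; exact this
    · exact hIco s hs.1 h
  -- x τ is strictly inside, so we can extend beyond τ: contradiction
  have hyτ : (x τ - x₀)^2 < (δ / 2)^2 := by
    have h1 := lemA τ hτS
    have h2 : (a - x₀)^2 < (δ / 2)^2 := by
      nlinarith [abs_nonneg (a - x₀), sq_abs (a - x₀)]
    nlinarith
  have hxτ : |x τ - x₀| < δ / 2 := by
    nlinarith [abs_nonneg (x τ - x₀), sq_abs (x τ - x₀)]
  have hcont : ∀ᶠ u in nhds τ, |x u - x₀| < δ / 2 := by
    have : Continuous fun u => |x u - x₀| := by fun_prop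
    exact (this.tendsto τ).eventually_lt_const hxτ |>.mono (fun u h => h)
  rcases Metric.eventually_nhds_iff.mp hcont with ⟨ε, hεpos, hε⟩
  have hext : τ + ε / 2 ∈ S := by
    refine ⟨by linarith, fun s hs => ?_⟩
    rcases le_or_gt s τ with h | h
    · exact hτS.2 s ⟨hs.1, h⟩
    · have : dist s τ < ε := by
        rw [Real.dist_eq, abs_of_pos (by linarith)]
        linarith [hs.2]
      exact (hε this).le
  have := le_csSup hbdd hext
  linarith
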